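/- Let Ω ⊂ ℝP^d (or the sphere S^d) be a properly convex open set, and let (g_n) be a sequence in GL_{d+1}(ℝ) with g_n(Ω) = Ω for all n, such that g_n converges (as matrices, up to scaling) to a nonzero non-invertible matrix g. Then both P(ker g) and P(im g) intersect the closure of Ω but do not intersect Ω. -/

import Mathlib

open Filter

/-- A set `C ⊆ ℝ^{d+1}` is a properly convex open cone if it is open, convex, nonempty,
invariant under positive scaling, and its closure is contained (away from `0`) in an open
linear half-space.  Rays of such a cone are exactly the points of a properly convex open
subset of the projective space `ℝP^d` (or of the sphere `S^d`). -/
def IsProperlyConvexCone {d : ℕ} (C : Set (Fin (d + 1) → ℝ)) : Prop :=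
  IsOpen C ∧ Convex ℝ C ∧ C.Nonempty ∧
    (∀ v ∈ C, ∀ t : ℝ, 0 < t → t • v ∈ C) ∧
    ∃ f : (Fin (d + 1) → ℝ) →ₗ[ℝ] ℝ, ∀ v ∈ closure C, v ≠ 0 → 0 < f v

attribute [local instance] Matrix.normedAddCommGroup Matrix.normedSpace

/-- If a matrix maps a "properly convex" open set `C` into `closure C` and kills some point
of `C`, then it is the zero matrix. -/
lemma aux_zero_of_vanish {d : ℕ} {C : Set (Fin (d + 1) → ℝ)} (hopen : IsOpen C)
    (f : (Fin (d + 1) → ℝ) →ₗ[ℝ] ℝ) (hf : ∀ v ∈ closure C, v ≠ 0 → 0 < f v)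
    {M : Matrix (Fin (d + 1)) (Fin (d + 1)) ℝ}
    (hmaps : ∀ v ∈ C, M.mulVec v ∈ closure C)
    {v : Fin (d + 1) → ℝ} (hv : v ∈ C) (hMv : M.mulVec v = 0) : M = 0 := by
  have key : ∀ u, M.mulVec u = 0 := by
    intro u
    have hcont : Continuous fun t : ℝ => v + t • u := by continuity
    have h0 : Tendsto (fun t : ℝ => v + t • u) (nhds 0) (nhds v) := by
      simpa using hcont.tendsto 0
    have hev : ∀ᶠ t : ℝ in nhds 0, v + t • u ∈ C :=
      h0.eventually (hopen.eventually_mem hv)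
    rw [Metric.eventually_nhds_iff] at hev
    obtain ⟨ε, hε, hball⟩ := hev
    have hd1 : dist (ε / 2) (0 : ℝ) < ε := by
      rw [Real.dist_eq, sub_zero, abs_of_pos (by linarith)]; linarith
    have hd2 : dist (-(ε / 2)) (0 : ℝ) < ε := by
      rw [Real.dist_eq, sub_zero, abs_neg, abs_of_pos (by linarith)]; linarith
    have h1 : v + (ε / 2) • u ∈ C := hball hd1
    have h2 : v + (-(ε / 2)) • u ∈ C := hball hd2
    have e1 : M.mulVec (v + (ε / 2) • u) = (ε / 2) • M.mulVec u := by
      rw [Matrix.mulVec_add, Matrix.mulVec_smul, hMv, zero_add]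
    have e2 : M.mulVec (v + (-(ε / 2)) • u) = -((ε / 2) • M.mulVec u) := by
      rw [Matrix.mulVec_add, Matrix.mulVec_smul, hMv, zero_add, neg_smul]
    have hx1 : (ε / 2) • M.mulVec u ∈ closure C := e1 ▸ hmaps _ h1
    have hx2 : -((ε / 2) • M.mulVec u) ∈ closure C := e2 ▸ hmaps _ h2
    by_contra hMu
    have hne : (ε / 2) • M.mulVec u ≠ 0 :=
      smul_ne_zero (by positivity) hMu
    have hp1 := hf _ hx1 hne
    have hp2 := hf _ hx2 (neg_ne_zero.mpr hne)
    rw [map_neg] at hp2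
    linarith
  ext i j
  have := congrFun (key (Pi.single j 1)) i
  simpa using this

set_option maxHeartbeats 1600000 in
/-- Let `Ω ⊂ ℝP^d` be a properly convex open set (encoded by its cone
`C ⊆ ℝ^{d+1}`), and `(g_n)` a sequence of invertible matrices preserving `Ω`, converging up
to positive scaling to a nonzero non-invertible matrix `g`.  Then the projectivizations of
`ker g` and of `im g` both intersect the closure of `Ω` but do not intersect `Ω`: there is a
nonzero vector of `ker g` (resp. of `im g`) in the closure of the cone `C`, while no vector
of `C` lies in `ker g` (resp. in `im g`). -/
theorem kernel_image_meet_boundary {d : ℕ} (C : Set (Fin (d + 1) → ℝ))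
    (hC : IsProperlyConvexCone C)
    (g : ℕ → Matrix (Fin (d + 1)) (Fin (d + 1)) ℝ)
    (hginv : ∀ n, IsUnit (g n).det)
    (hgC : ∀ n, (g n).mulVec '' C = C)
    (glim : Matrix (Fin (d + 1)) (Fin (d + 1)) ℝ)
    (hscal : ∃ c : ℕ → ℝ, (∀ n, 0 < c n) ∧
      Tendsto (fun n => c n • g n) atTop (nhds glim))
    (hg0 : glim ≠ 0) (hgdet : glim.det = 0) :
    ((∃ v : Fin (d + 1) → ℝ, v ≠ 0 ∧ glim.mulVec v = 0 ∧ v ∈ closure C) ∧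
      ∀ v ∈ C, glim.mulVec v ≠ 0) ∧
    ((∃ v : Fin (d + 1) → ℝ, v ≠ 0 ∧ (∃ w, glim.mulVec w = v) ∧ v ∈ closure C) ∧
      ∀ v ∈ C, ¬ ∃ w, glim.mulVec w = v) := by
  obtain ⟨hopen, hconv, ⟨v₀, hv₀⟩, hscale, f, hf⟩ := hC
  obtain ⟨c, hc, hcg⟩ := hscal
  -- each `g n` maps `C` into `C`
  have hginto : ∀ n, ∀ v ∈ C, (g n).mulVec v ∈ C := fun n v hv =>
    (hgC n) ▸ Set.mem_image_of_mem _ hv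
  -- each `(g n)⁻¹` maps `C` into `C`
  have hinv : ∀ n, ∀ v ∈ C, (g n)⁻¹.mulVec v ∈ C := by
    intro n v hv
    rw [← hgC n] at hv
    obtain ⟨w, hw, rfl⟩ := hv
    rw [Matrix.mulVec_mulVec, Matrix.nonsing_inv_mul _ (hginv n), Matrix.one_mulVec]
    exact hw
  -- `glim` maps `C` into `closure C`
  have hglimC : ∀ v ∈ C, glim.mulVec v ∈ closure C := by
    intro v hv
    have htend : Tendsto (fun n => (c n • g n).mulVec v) atTop (nhds (glim.mulVec v)) :=
      ((continuous_id.matrix_mulVec continuous_const).tendsto glim).comp hcg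
    refine mem_closure_of_tendsto htend (Eventually.of_forall fun n => ?_)
    rw [Matrix.smul_mulVec]
    exact hscale _ (hginto n v hv) _ (hc n)
  -- the inverses, normalized
  set h : ℕ → Matrix (Fin (d + 1)) (Fin (d + 1)) ℝ := fun n => (g n)⁻¹ with hh
  have hhne : ∀ n, h n ≠ 0 := by
    intro n hn
    have h1 : h n * g n = 1 := Matrix.nonsing_inv_mul _ (hginv n)
    rw [hn, zero_mul] at h1
    exact zero_ne_one h1
  set dseq : ℕ → ℝ := fun n => ‖h n‖⁻¹ with hdseq
  have hd : ∀ n, 0 < dseq n := fun n => inv_pos.mpr (norm_pos_iff.mpr (hhne n))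
  have hsphere : ∀ n, dseq n • h n ∈ Metric.sphere (0 : Matrix (Fin (d + 1)) (Fin (d + 1)) ℝ) 1 := by
    intro n
    simp only [Metric.mem_sphere, dist_zero_right, norm_smul, hdseq,
      norm_inv, norm_norm]
    exact inv_mul_cancel₀ (norm_ne_zero_iff.mpr (hhne n))
  obtain ⟨hlim, hlimmem, φ, hφ, hφtend⟩ :=
    (isCompact_sphere (0 : Matrix (Fin (d + 1)) (Fin (d + 1)) ℝ) 1).tendsto_subseq hsphere
  have hlimne : hlim ≠ 0 := by
    intro h0
    rw [h0] at hlimmem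
    simp at hlimmem
  -- products are scalar matrices
  have hprod : ∀ n, (c n • g n) * (dseq n • h n) =
      (c n * dseq n) • (1 : Matrix (Fin (d + 1)) (Fin (d + 1)) ℝ) := by
    intro n
    rw [smul_mul_smul_comm, Matrix.mul_nonsing_inv _ (hginv n)]
  have hprod' : ∀ n, (dseq n • h n) * (c n • g n) =
      (c n * dseq n) • (1 : Matrix (Fin (d + 1)) (Fin (d + 1)) ℝ) := by
    intro n
    rw [smul_mul_smul_comm, Matrix.nonsing_inv_mul _ (hginv n), mul_comm]
  have hcgφ : Tendsto (fun k => c (φ k) • g (φ k)) atTop (nhds glim) :=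
    hcg.comp hφ.tendsto_atTop
  have hmul1 : Tendsto (fun k => (c (φ k) • g (φ k)) * (dseq (φ k) • h (φ k)))
      atTop (nhds (glim * hlim)) :=
    hcgφ.mul hφtend
  have hmul2 : Tendsto (fun k => (dseq (φ k) • h (φ k)) * (c (φ k) • g (φ k)))
      atTop (nhds (hlim * glim)) :=
    Filter.Tendsto.mul (by exact hφtend) hcgφ
  set lam : ℝ := (glim * hlim) 0 0 with hlam_def
  have hc00 : Continuous fun M : Matrix (Fin (d + 1)) (Fin (d + 1)) ℝ => M 0 0 :=
    (continuous_apply (0 : Fin (d + 1))).comp (continuous_apply (0 : Fin (d + 1)))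
  have hscalar : Tendsto (fun k => c (φ k) * dseq (φ k)) atTop (nhds lam) := by
    refine Tendsto.congr (fun k => ?_) ((hc00.tendsto (glim * hlim)).comp hmul1)
    show ((c (φ k) • g (φ k)) * (dseq (φ k) • h (φ k))) 0 0 = c (φ k) * dseq (φ k)
    rw [hprod]
    simp [Matrix.smul_apply, Matrix.one_apply]
  have hsm1 : Tendsto (fun k => (c (φ k) * dseq (φ k)) •
      (1 : Matrix (Fin (d + 1)) (Fin (d + 1)) ℝ)) atTop (nhds (lam • 1)) :=
    hscalar.smul_const 1
  have hgh : glim * hlim = lam • 1 := by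
    refine tendsto_nhds_unique ?_ hsm1
    simpa [hprod] using hmul1
  have hhg : hlim * glim = lam • 1 := by
    refine tendsto_nhds_unique ?_ hsm1
    simpa [hprod'] using hmul2
  have hlam0 : lam = 0 := by
    by_contra hl
    have hdet : (glim * hlim).det = (lam • (1 : Matrix (Fin (d + 1)) (Fin (d + 1)) ℝ)).det := by
      rw [hgh]
    rw [Matrix.det_mul, hgdet, zero_mul, Matrix.det_smul, Matrix.det_one, mul_one] at hdet
    exact hl ((pow_eq_zero_iff (by simp : Fintype.card (Fin (d + 1)) ≠ 0)).mp hdet.symm)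
  have hgh0 : glim * hlim = 0 := by rw [hgh, hlam0, zero_smul]
  have hhg0 : hlim * glim = 0 := by rw [hhg, hlam0, zero_smul]
  -- `hlim` maps `C` into `closure C`
  have hhlimC : ∀ v ∈ C, hlim.mulVec v ∈ closure C := by
    intro v hv
    have htend : Tendsto (fun k => (dseq (φ k) • h (φ k)).mulVec v) atTop
        (nhds (hlim.mulVec v)) :=
      ((continuous_id.matrix_mulVec continuous_const).tendsto hlim).comp hφtend
    refine mem_closure_of_tendsto htend (Eventually.of_forall fun k => ?_)
    rw [Matrix.smul_mulVec]
    exact hscale _ (hinv _ v hv) _ (hd _)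
  -- Part 2 : `glim` kills no point of `C`
  have part2 : ∀ v ∈ C, glim.mulVec v ≠ 0 := fun v hv hvz =>
    hg0 (aux_zero_of_vanish hopen f hf hglimC hv hvz)
  -- some point of `C` is not killed by `hlim`
  have hex : ∃ a ∈ C, hlim.mulVec a ≠ 0 := by
    by_contra hno
    push_neg at hno
    exact hlimne (aux_zero_of_vanish hopen f hf hhlimC hv₀ (hno v₀ hv₀))
  obtain ⟨a, ha, hane⟩ := hex
  refine ⟨⟨⟨hlim.mulVec a, hane, ?_, hhlimC a ha⟩, part2⟩,
    ⟨⟨glim.mulVec v₀, part2 v₀ hv₀, ⟨v₀, rfl⟩, hglimC v₀ hv₀⟩, ?_⟩⟩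
  · rw [Matrix.mulVec_mulVec, hgh0, Matrix.zero_mulVec]
  · rintro v hv ⟨w, hw⟩
    have hzv : hlim.mulVec v = 0 := by
      rw [← hw, Matrix.mulVec_mulVec, hhg0, Matrix.zero_mulVec]
    exact hlimne (aux_zero_of_vanish hopen f hf hhlimC hv hzv)
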